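/- Let n ≥ 1 and let R_1, …, R_{n+1} be exchangeable real-valued random variables such that P(R_i = R_j) = 0 for all i ≠ j. Define the conformal p-value π = (1 + #{i ∈ {1,…,n} : R_i ≥ R_{n+1}})/(n+1). Then for every α ∈ (0,1), P(π > α) ≤ 1 − α + 1/(n+1). -/
import Mathlib


open MeasureTheory Filter Set
open scoped ENNReal

/-- A finite family of random elements is exchangeable if its joint distribution is
invariant under permutations of the indices. -/
def Exchangeable {Ω E : Type*} [MeasurableSpace Ω] [MeasurableSpace E]
    (μ : Measure Ω) {k : ℕ} (V : Fin k → Ω → E) : Prop :=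
  ∀ σ : Equiv.Perm (Fin k),
    Measure.map (fun ω (i : Fin k) => V (σ i) ω) μ =
      Measure.map (fun ω (i : Fin k) => V i ω) μ

noncomputable def rankCount (n : ℕ) (i : Fin (n+1)) (x : Fin (n+1) → ℝ) : ℕ :=
  (Finset.univ.filter (fun j => j ≠ i ∧ x i ≤ x j)).card

lemma rankCount_le (n : ℕ) (i : Fin (n+1)) (x : Fin (n+1) → ℝ) :
    rankCount n i x ≤ n := by
  unfold rankCount
  have h : (Finset.univ.filter (fun j => j ≠ i ∧ x i ≤ x j)) ⊆ Finset.univ \ {i} := by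
    intro j hj
    simp only [Finset.mem_filter] at hj
    simp [hj.2.1]
  calc _ ≤ (Finset.univ \ {i}).card := Finset.card_le_card h
    _ = n := by simp [Finset.card_sdiff_of_subset]

lemma rankCount_injective (n : ℕ) (x : Fin (n+1) → ℝ) (hx : Function.Injective x) :
    Function.Injective (fun i => rankCount n i x) := by
  have key : ∀ i j : Fin (n+1), x i < x j → rankCount n j x < rankCount n i x := by
    intro i j hij
    unfold rankCount
    apply Finset.card_lt_card
    constructor
    · intro k hk
      simp only [Finset.mem_filter, Finset.mem_univ, true_and] at hk ⊢
      refine ⟨fun h => ?_, le_trans hij.le hk.2⟩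
      · subst h; exact absurd (lt_of_lt_of_le hij hk.2) (lt_irrefl _)
    · intro h
      have hj : j ∈ Finset.univ.filter (fun k => k ≠ i ∧ x i ≤ x k) := by
        simp only [Finset.mem_filter, Finset.mem_univ, true_and]
        exact ⟨fun h => by subst h; exact absurd hij (lt_irrefl _), hij.le⟩
      have := h hj
      simp only [Finset.mem_filter, Finset.mem_univ, true_and] at this
      exact this.1 rfl
  intro i j hij
  by_contra hne
  rcases lt_trichotomy (x i) (x j) with h | h | h
  · exact absurd hij (ne_of_gt (key i j h))
  · exact hne (hx h)
  · exact absurd hij (ne_of_lt (key j i h))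

lemma card_rank_ge (n : ℕ) (x : Fin (n+1) → ℝ) (hx : Function.Injective x) (m : ℕ) :
    (Finset.univ.filter (fun i => m ≤ rankCount n i x)).card = n + 1 - m := by
  have hlt : ∀ i, rankCount n i x < n + 1 := fun i => Nat.lt_succ_of_le (rankCount_le n i x)
  set g : Fin (n+1) → Fin (n+1) := fun i => ⟨rankCount n i x, hlt i⟩ with hg
  have hginj : Function.Injective g := by
    intro a b hab
    exact rankCount_injective n x hx (by simpa [hg, Fin.ext_iff] using hab)
  have h1 : (Finset.univ.filter (fun i => m ≤ rankCount n i x)) =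
      Finset.univ.filter (fun i => m ≤ ((g i : Fin (n+1)) : ℕ)) := rfl
  rw [h1]
  have h2 : (Finset.univ.filter (fun i => m ≤ ((g i : Fin (n+1)) : ℕ))).card =
      (Finset.univ.filter (fun k : Fin (n+1) => m ≤ (k : ℕ))).card := by
    rw [← Finset.card_image_of_injective _ hginj]
    congr 1
    ext k
    simp only [Finset.mem_image, Finset.mem_filter, Finset.mem_univ, true_and]
    constructor
    · rintro ⟨a, ha, rfl⟩; exact ha
    · intro hk
      obtain ⟨a, rfl⟩ := Finite.injective_iff_surjective.mp hginj k
      exact ⟨a, hk, rfl⟩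
  rw [h2]
  rw [← Nat.card_Ico m (n+1)]
  refine Finset.card_bij (fun k _ => (k : ℕ)) ?_ ?_ ?_
  · intro a ha
    simp only [Finset.mem_filter, Finset.mem_univ, true_and] at ha
    simp [Finset.mem_Ico, ha, a.isLt]
  · intro a _ b _ hab; exact Fin.val_injective hab
  · intro b hb
    simp only [Finset.mem_Ico] at hb
    exact ⟨⟨b, hb.2⟩, by simp [hb.1], rfl⟩

lemma rankCount_comp (n : ℕ) (σ : Equiv.Perm (Fin (n+1))) (i : Fin (n+1))
    (x : Fin (n+1) → ℝ) : rankCount n i (x ∘ σ) = rankCount n (σ i) x := by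
  unfold rankCount
  refine Finset.card_bij (fun j _ => σ j) ?_ ?_ ?_
  · intro a ha
    simp only [Finset.mem_filter, Finset.mem_univ, true_and, Function.comp_apply] at ha ⊢
    exact ⟨fun h => ha.1 (σ.injective h), ha.2⟩
  · intro a _ b _ h; exact σ.injective h
  · intro b hb
    simp only [Finset.mem_filter, Finset.mem_univ, true_and] at hb
    refine ⟨σ.symm b, ?_, by simp⟩
    simp only [Finset.mem_filter, Finset.mem_univ, true_and, Function.comp_apply,
      Equiv.apply_symm_apply]
    exact ⟨fun h => hb.1 (by rw [← h]; simp), hb.2⟩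

lemma natcard_eq (n : ℕ) (x : Fin (n+1) → ℝ) :
    Nat.card {i : Fin n // x (Fin.last n) ≤ x i.castSucc} =
      rankCount n (Fin.last n) x := by
  rw [Nat.card_eq_fintype_card, Fintype.card_subtype]
  unfold rankCount
  refine Finset.card_bij (fun i _ => i.castSucc) ?_ ?_ ?_
  · intro a ha
    simp only [Finset.mem_filter, Finset.mem_univ, true_and] at ha ⊢
    exact ⟨Fin.ne_of_lt (Fin.castSucc_lt_last a), ha⟩
  · intro a _ b _ h; exact Fin.castSucc_injective n h
  · intro b hb
    simp only [Finset.mem_filter, Finset.mem_univ, true_and] at hb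
    obtain ⟨a, rfl⟩ := (Fin.exists_castSucc_eq).mpr hb.1
    exact ⟨a, by simpa using hb.2, rfl⟩

lemma measurable_rankCount (n : ℕ) (i : Fin (n+1)) :
    Measurable (fun x : Fin (n+1) → ℝ => rankCount n i x) := by
  have : (fun x : Fin (n+1) → ℝ => rankCount n i x) =
      fun x => ∑ j : Fin (n+1), if j ≠ i ∧ x i ≤ x j then 1 else 0 := by
    funext x; rw [rankCount, Finset.card_filter]
  rw [this]
  refine Finset.measurable_sum _ fun j _ => ?_
  by_cases hji : j = i
  · simp [hji]
  · have : (fun x : Fin (n+1) → ℝ => if j ≠ i ∧ x i ≤ x j then (1:ℕ) else 0) =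
        fun x => if x i ≤ x j then (1:ℕ) else 0 := by
      funext x; simp [hji]
    rw [this]
    exact Measurable.ite (measurableSet_le (measurable_pi_apply i) (measurable_pi_apply j))
      measurable_const measurable_const

lemma measurableSet_rank_ge (n : ℕ) (i : Fin (n+1)) (m : ℕ) :
    MeasurableSet {x : Fin (n+1) → ℝ | m ≤ rankCount n i x} :=
  measurable_rankCount n i (MeasurableSet.of_discrete (s := {k | m ≤ k}))

/-- For exchangeable and almost-surely tie-free scores `R_1, …, R_{n+1}`,
the conformal p-value `π = (1 + #{i ≤ n : R_i ≥ R_{n+1}})/(n+1)` satisfies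
`P(π > α) ≤ 1 - α + 1/(n+1)` for every `α ∈ (0,1)`. -/
theorem conformal_pvalue_upper_bound
    {Ω : Type*} [MeasurableSpace Ω] (μ : Measure Ω) [IsProbabilityMeasure μ]
    (n : ℕ) (hn : 1 ≤ n)
    (R : Fin (n + 1) → Ω → ℝ)
    (hRmeas : ∀ i, Measurable (R i))
    (hexch : Exchangeable μ R)
    (hties : ∀ i j : Fin (n + 1), i ≠ j → μ {ω | R i ω = R j ω} = 0)
    (π : Ω → ℝ)
    (hπ : ∀ ω, π ω =
      (1 + (Nat.card {i : Fin n // R (Fin.last n) ω ≤ R i.castSucc ω} : ℝ)) / (n + 1))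
    (α : ℝ) (hα : α ∈ Set.Ioo (0 : ℝ) 1) :
    μ {ω | α < π ω} ≤ ENNReal.ofReal (1 - α + 1 / (n + 1)) := by
  obtain ⟨hα0, hα1⟩ := hα
  set m : ℕ := ⌈α * (n+1) - 1⌉₊ with hm
  set J : Ω → (Fin (n+1) → ℝ) := fun ω i => R i ω with hJdef
  have hJm : Measurable J := measurable_pi_lambda _ hRmeas
  set E : Fin (n+1) → Set Ω := fun i => J ⁻¹' {x | m ≤ rankCount n i x} with hE
  have hEmeas : ∀ i, MeasurableSet (E i) := fun i => hJm (measurableSet_rank_ge n i m)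
  -- Step 1: {α < π} ⊆ E (last)
  have hsub : {ω | α < π ω} ⊆ E (Fin.last n) := by
    intro ω hω
    simp only [mem_setOf_eq, hπ ω] at hω
    have hK : (Nat.card {i : Fin n // R (Fin.last n) ω ≤ R i.castSucc ω} : ℝ)
        = rankCount n (Fin.last n) (J ω) := by
      norm_cast
      exact natcard_eq n (J ω)
    rw [hK] at hω
    have hpos : (0:ℝ) < n + 1 := by positivity
    have h1 : α * (n + 1) < 1 + rankCount n (Fin.last n) (J ω) := by
      rw [lt_div_iff₀ hpos] at hω
      linarith
    simp only [hE, mem_preimage, mem_setOf_eq]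
    rw [hm]
    exact Nat.ceil_le.mpr (by linarith)
  -- Step 2: all E i have the same measure
  have hEq : ∀ i, μ (E i) = μ (E (Fin.last n)) := by
    intro i
    set σ := Equiv.swap i (Fin.last n) with hσ
    set T : (Fin (n+1) → ℝ) → (Fin (n+1) → ℝ) := fun x k => x (σ k) with hT
    have hTm : Measurable T := measurable_pi_lambda _ fun k => measurable_pi_apply _
    have hmap : Measure.map T (Measure.map J μ) = Measure.map J μ := by
      rw [Measure.map_map hTm hJm]
      exact hexch σ
    have hpre : T ⁻¹' {x | m ≤ rankCount n (Fin.last n) x} = {x | m ≤ rankCount n i x} := by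
      ext x
      simp only [mem_preimage, mem_setOf_eq]
      have : T x = x ∘ σ := rfl
      rw [this, rankCount_comp, Equiv.swap_apply_right]
    calc μ (E i) = Measure.map J μ {x | m ≤ rankCount n i x} :=
          (Measure.map_apply hJm (measurableSet_rank_ge n i m)).symm
      _ = Measure.map J μ (T ⁻¹' {x | m ≤ rankCount n (Fin.last n) x}) := by rw [hpre]
      _ = Measure.map T (Measure.map J μ) {x | m ≤ rankCount n (Fin.last n) x} :=
          (Measure.map_apply hTm (measurableSet_rank_ge n (Fin.last n) m)).symm
      _ = Measure.map J μ {x | m ≤ rankCount n (Fin.last n) x} := by rw [hmap]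
      _ = μ (E (Fin.last n)) := Measure.map_apply hJm (measurableSet_rank_ge n (Fin.last n) m)
  -- a.e. injectivity
  have hae : ∀ᵐ ω ∂μ, Function.Injective (J ω) := by
    rw [ae_iff]
    have hss : {ω | ¬ Function.Injective (J ω)} ⊆
        ⋃ (i : Fin (n+1)) (j : Fin (n+1)) (_ : i ≠ j), {ω | R i ω = R j ω} := by
      intro ω hω
      simp only [mem_setOf_eq, Function.Injective] at hω
      push_neg at hω
      obtain ⟨i, j, hij, hne⟩ := hω
      exact mem_iUnion.mpr ⟨i, mem_iUnion.mpr ⟨j, mem_iUnion.mpr ⟨hne, hij⟩⟩⟩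
    exact measure_mono_null hss (measure_iUnion_null fun i => measure_iUnion_null fun j =>
      measure_iUnion_null fun hij => hties i j hij)
  -- Step 3: sum of measures
  have hsum : ∑ i : Fin (n+1), μ (E i) = ((n + 1 - m : ℕ) : ℝ≥0∞) := by
    have h1 : ∀ i : Fin (n+1), μ (E i) =
        ∫⁻ ω, (E i).indicator (fun _ => (1:ℝ≥0∞)) ω ∂μ := by
      intro i
      exact (lintegral_indicator_one (hEmeas i)).symm
    simp_rw [h1]
    rw [← lintegral_finset_sum _ (fun i _ => (measurable_const.indicator (hEmeas i)))]
    have h2 : ∫⁻ ω, ∑ i : Fin (n+1), (E i).indicator (fun _ => (1:ℝ≥0∞)) ω ∂μ =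
        ∫⁻ _, ((n + 1 - m : ℕ) : ℝ≥0∞) ∂μ := by
      apply lintegral_congr_ae
      filter_upwards [hae] with ω hω
      have : ∑ i : Fin (n+1), (E i).indicator (fun _ => (1:ℝ≥0∞)) ω =
          ∑ i : Fin (n+1), if m ≤ rankCount n i (J ω) then (1:ℝ≥0∞) else 0 := by
        refine Finset.sum_congr rfl fun i _ => ?_
        by_cases h : m ≤ rankCount n i (J ω)
        · rw [if_pos h, Set.indicator_of_mem (by exact h)]
        · rw [if_neg h, Set.indicator_of_notMem (by exact h)]
      rw [this, Finset.sum_boole, card_rank_ge n (J ω) hω m]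
    rw [h2, lintegral_const, measure_univ, mul_one]
  -- combine: (n+1) * μ (E last) = n+1-m
  have hcount : ((n:ℝ≥0∞) + 1) * μ (E (Fin.last n)) = ((n + 1 - m : ℕ) : ℝ≥0∞) := by
    rw [← hsum]
    simp_rw [hEq]
    rw [Finset.sum_const, Finset.card_univ, Fintype.card_fin]
    simp [nsmul_eq_mul]
  have hElast : μ (E (Fin.last n)) = ((n + 1 - m : ℕ) : ℝ≥0∞) / ((n:ℝ≥0∞) + 1) := by
    rw [ENNReal.eq_div_iff (by simp) (by simp)]
    exact hcount
  calc μ {ω | α < π ω} ≤ μ (E (Fin.last n)) := measure_mono hsub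
    _ = ((n + 1 - m : ℕ) : ℝ≥0∞) / ((n:ℝ≥0∞) + 1) := hElast
    _ ≤ ENNReal.ofReal (1 - α + 1 / (n + 1)) := by
        have hnn : ((n:ℝ≥0∞) + 1) = ENNReal.ofReal ((n:ℝ) + 1) := by
          rw [ENNReal.ofReal_add (by positivity) (by norm_num)]
          simp [ENNReal.ofReal_natCast]
        have hnum : ((n + 1 - m : ℕ) : ℝ≥0∞) = ENNReal.ofReal ((n + 1 - m : ℕ) : ℝ) := by
          simp [ENNReal.ofReal_natCast]
        rw [hnn, hnum, ← ENNReal.ofReal_div_of_pos (by positivity)]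
        apply ENNReal.ofReal_le_ofReal
        rw [div_le_iff₀ (by positivity)]
        have hceil : α * (n+1) - 1 ≤ (m:ℝ) := Nat.le_ceil _
        have hcast : ((n + 1 - m : ℕ) : ℝ) ≤ (n:ℝ) + 2 - α * (n+1) := by
          rcases le_or_gt m (n+1) with h | h
          · rw [Nat.cast_sub h]
            push_cast
            linarith
          · rw [Nat.sub_eq_zero_of_le h.le]
            push_cast
            nlinarith
        have hfield : (1 - α + 1 / ((n:ℝ) + 1)) * ((n:ℝ) + 1) = (n:ℝ) + 2 - α * (n+1) := by
          field_simp
          ring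
        rw [hfield]
        exact hcast
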